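/- Let β ∈ (0,2] and t > 0. The symmetric double integral 2 ∫_{|ξ|>1} (|ξ|⁴/4) [∫_0^t e^{-(t-s)|ξ|²/2} (∫_0^s e^{-(t-s')|ξ|²/2} |t-s'|^β ds') ds] μ(dξ) is bounded by K ∫_{|ξ|>1} |ξ|^{-2β} μ(dξ) for a constant K depending only on β, and is hence finite whenever ∫_{ℝ^d} (1+|ξ|^{2β})^{-1} μ(dξ) < ∞. -/

import Mathlib

open MeasureTheory ENNReal

lemma auxA (β x : ℝ) (hβ : 0 < β) (hβ2 : β ≤ 2) (hx : 0 ≤ x) :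
    x ^ β * Real.exp (-x) ≤ 5 := by
  have hexp : Real.exp (-x) ≤ 1 := Real.exp_le_one_iff.2 (by linarith)
  have h1 : x ^ β ≤ 1 + x ^ 2 := by
    rcases le_total x 1 with h | h
    · have := Real.rpow_le_one hx h hβ.le
      nlinarith [sq_nonneg x]
    · have h2 : x ^ β ≤ x ^ (2 : ℝ) := Real.rpow_le_rpow_of_exponent_le h hβ2
      rw [Real.rpow_two] at h2
      linarith
  have h2 : x ^ 2 ≤ 4 * Real.exp x := by
    have h := Real.add_one_le_exp (x / 2)
    have hxx : Real.exp x = Real.exp (x / 2) * Real.exp (x / 2) := by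
      rw [← Real.exp_add]; ring_nf
    nlinarith [Real.exp_pos (x / 2)]
  have h3 : Real.exp (-x) * Real.exp x = 1 := by rw [← Real.exp_add]; simp
  have hr : 0 ≤ x ^ β := Real.rpow_nonneg hx β
  nlinarith [Real.exp_pos (-x), Real.exp_pos x]

lemma integral_exp_linear (c d u v : ℝ) (hc : c ≠ 0) :
    ∫ x in u..v, Real.exp (c * x + d)
      = (Real.exp (c * v + d) - Real.exp (c * u + d)) / c := by
  have h : ∀ x : ℝ, HasDerivAt (fun y => Real.exp (c * y + d) / c)
      (Real.exp (c * x + d)) x := by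
    intro x
    have h1 : HasDerivAt (fun y : ℝ => c * y + d) c x := by
      simpa using ((hasDerivAt_id x).const_mul c).add_const d
    have h2 := (Real.hasDerivAt_exp (c * x + d)).comp x h1
    have h3 := h2.div_const c
    have : Real.exp (c * x + d) * c / c = Real.exp (c * x + d) := by
      field_simp
    rwa [this] at h3
  have hcont : Continuous fun x : ℝ => Real.exp (c * x + d) :=
    Real.continuous_exp.comp (by continuity)
  rw [intervalIntegral.integral_eq_sub_of_hasDerivAt (fun x _ => h x)
    (hcont.intervalIntegrable u v)]
  ring

lemma integral_exp_linear_le (c d u v : ℝ) (hc : 0 < c) (hd : c * v + d ≤ 0) :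
    ∫ x in u..v, Real.exp (c * x + d) ≤ 1 / c := by
  rw [integral_exp_linear c d u v hc.ne']
  have h1 := (Real.exp_pos (c * u + d)).le
  have h2 : Real.exp (c * v + d) ≤ 1 := Real.exp_le_one_iff.2 hd
  gcongr
  linarith

lemma pointwise (β t n : ℝ) (hβ : 0 < β) (hβ2 : β ≤ 2) (ht : 0 < t) (hn : 1 ≤ n) :
    n ^ 4 / 4 *
      ∫ s in (0:ℝ)..t, Real.exp (-(t - s) * n ^ 2 / 2) *
        ∫ s' in (0:ℝ)..s, Real.exp (-(t - s') * n ^ 2 / 2) * |t - s'| ^ β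
    ≤ 10 * 4 ^ β * n ^ (-(2 * β)) := by
  have hn0 : (0:ℝ) < n := lt_of_lt_of_le one_pos hn
  set a : ℝ := n ^ 2 with ha_def
  have ha : (1:ℝ) ≤ a := by nlinarith
  have ha0 : (0:ℝ) < a := by positivity
  have hrpow_cont : Continuous fun y : ℝ => |t - y| ^ β := by
    rw [continuous_iff_continuousAt]
    intro y
    exact (Real.continuousAt_rpow_const _ _ (Or.inr hβ.le)).comp
      (continuous_const.sub continuous_id).abs.continuousAt
  have hf_cont : Continuous fun s' : ℝ => Real.exp (-(t - s') * a / 2) * |t - s'| ^ β :=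
    (Real.continuous_exp.comp (by continuity)).mul hrpow_cont
  have hq : (0:ℝ) ≤ (4 / a) ^ β := Real.rpow_nonneg (by positivity) _
  -- inner bound
  have inner_le : ∀ s ∈ Set.Icc (0:ℝ) t,
      (∫ s' in (0:ℝ)..s, Real.exp (-(t - s') * a / 2) * |t - s'| ^ β)
        ≤ 20 * (4 / a) ^ β / a := by
    intro s hs
    obtain ⟨hs0, hst⟩ := hs
    have hg_cont : Continuous fun s' : ℝ => 5 * (4 / a) ^ β * Real.exp (-(t - s') * a / 4) :=
      continuous_const.mul (Real.continuous_exp.comp (by continuity))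
    have step1 : (∫ s' in (0:ℝ)..s, Real.exp (-(t - s') * a / 2) * |t - s'| ^ β)
        ≤ ∫ s' in (0:ℝ)..s, 5 * (4 / a) ^ β * Real.exp (-(t - s') * a / 4) := by
      apply intervalIntegral.integral_mono_on hs0 (hf_cont.intervalIntegrable _ _)
        (hg_cont.intervalIntegrable _ _)
      intro s' hs'
      have hts' : 0 ≤ t - s' := by have := hs'.2; linarith
      rw [abs_of_nonneg hts']
      set x := (t - s') * a / 4 with hx_def
      have hx : 0 ≤ x := by positivity
      have h1 : t - s' = 4 / a * x := by rw [hx_def]; field_simp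
      have h2 : Real.exp (-(t - s') * a / 2) = Real.exp (-x) * Real.exp (-x) := by
        rw [← Real.exp_add]; congr 1; rw [hx_def]; ring
      have h3 : (t - s') ^ β = (4 / a) ^ β * x ^ β := by
        rw [h1, Real.mul_rpow (by positivity) hx]
      have h4 : Real.exp (-(t - s') * a / 4) = Real.exp (-x) := by
        congr 1; rw [hx_def]; ring
      rw [h2, h3, h4]
      have key := auxA β x hβ hβ2 hx
      have e := (Real.exp_pos (-x)).le
      calc Real.exp (-x) * Real.exp (-x) * ((4 / a) ^ β * x ^ β)
          = (x ^ β * Real.exp (-x)) * ((4 / a) ^ β * Real.exp (-x)) := by ring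
        _ ≤ 5 * ((4 / a) ^ β * Real.exp (-x)) :=
            mul_le_mul_of_nonneg_right key (mul_nonneg hq e)
        _ = 5 * (4 / a) ^ β * Real.exp (-x) := by ring
    have step2 : (∫ s' in (0:ℝ)..s, 5 * (4 / a) ^ β * Real.exp (-(t - s') * a / 4))
        ≤ 20 * (4 / a) ^ β / a := by
      rw [intervalIntegral.integral_const_mul]
      have heq : (fun s' : ℝ => Real.exp (-(t - s') * a / 4))
          = fun s' : ℝ => Real.exp (a / 4 * s' + -(t * a / 4)) := by
        funext s'; congr 1; ring
      rw [heq]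
      have hb := integral_exp_linear_le (a / 4) (-(t * a / 4)) 0 s (by positivity)
        (by nlinarith)
      calc 5 * (4 / a) ^ β * ∫ s' in (0:ℝ)..s, Real.exp (a / 4 * s' + -(t * a / 4))
          ≤ 5 * (4 / a) ^ β * (1 / (a / 4)) :=
            mul_le_mul_of_nonneg_left hb (by positivity)
        _ = 20 * (4 / a) ^ β / a := by field_simp; ring
    linarith
  -- outer bound
  have hI_cont : Continuous fun s : ℝ =>
      ∫ s' in (0:ℝ)..s, Real.exp (-(t - s') * a / 2) * |t - s'| ^ β :=
    intervalIntegral.continuous_primitive (fun u v => hf_cont.intervalIntegrable u v) 0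
  have outer : (∫ s in (0:ℝ)..t, Real.exp (-(t - s) * a / 2) *
        ∫ s' in (0:ℝ)..s, Real.exp (-(t - s') * a / 2) * |t - s'| ^ β)
      ≤ 40 * (4 / a) ^ β / a ^ 2 := by
    have step1 : (∫ s in (0:ℝ)..t, Real.exp (-(t - s) * a / 2) *
          ∫ s' in (0:ℝ)..s, Real.exp (-(t - s') * a / 2) * |t - s'| ^ β)
        ≤ ∫ s in (0:ℝ)..t, Real.exp (-(t - s) * a / 2) * (20 * (4 / a) ^ β / a) := by
      apply intervalIntegral.integral_mono_on ht.le
        (((Real.continuous_exp.comp (by continuity)).mul hI_cont).intervalIntegrable _ _)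
        (((Real.continuous_exp.comp (by continuity)).mul continuous_const).intervalIntegrable _ _)
      intro s hs
      exact mul_le_mul_of_nonneg_left (inner_le s hs) (Real.exp_pos _).le
    have step2 : (∫ s in (0:ℝ)..t, Real.exp (-(t - s) * a / 2) * (20 * (4 / a) ^ β / a))
        ≤ 40 * (4 / a) ^ β / a ^ 2 := by
      rw [intervalIntegral.integral_mul_const]
      have heq : (fun s : ℝ => Real.exp (-(t - s) * a / 2))
          = fun s : ℝ => Real.exp (a / 2 * s + -(t * a / 2)) := by
        funext s; congr 1; ring
      rw [heq]
      have hb := integral_exp_linear_le (a / 2) (-(t * a / 2)) 0 t (by positivity)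
        (by nlinarith)
      calc (∫ s in (0:ℝ)..t, Real.exp (a / 2 * s + -(t * a / 2))) * (20 * (4 / a) ^ β / a)
          ≤ (1 / (a / 2)) * (20 * (4 / a) ^ β / a) :=
            mul_le_mul_of_nonneg_right hb (by positivity)
        _ = 40 * (4 / a) ^ β / a ^ 2 := by field_simp; ring
    linarith
  -- combine
  have hfinal : n ^ 4 / 4 *
      (∫ s in (0:ℝ)..t, Real.exp (-(t - s) * a / 2) *
        ∫ s' in (0:ℝ)..s, Real.exp (-(t - s') * a / 2) * |t - s'| ^ β)
      ≤ 10 * (4 / a) ^ β := by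
    have hn4 : n ^ 4 = a ^ 2 := by rw [ha_def]; ring
    calc n ^ 4 / 4 * _ ≤ n ^ 4 / 4 * (40 * (4 / a) ^ β / a ^ 2) :=
          mul_le_mul_of_nonneg_left outer (by positivity)
      _ = 10 * (4 / a) ^ β := by rw [hn4]; field_simp; ring
  have hrw : 10 * (4 / a) ^ β = 10 * 4 ^ β * n ^ (-(2 * β)) := by
    rw [Real.div_rpow (by norm_num) ha0.le]
    have h1 : a ^ β = n ^ (2 * β) := by
      rw [ha_def, ← Real.rpow_natCast n 2, ← Real.rpow_mul hn0.le]
      norm_num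
    rw [h1, Real.rpow_neg hn0.le]
    ring
  rw [← hrw]
  exact hfinal

theorem stmt6 (β : ℝ) (hβ : 0 < β) (hβ2 : β ≤ 2) :
    ∃ K : ℝ, 0 < K ∧ ∀ (d : ℕ) (μ : Measure (EuclideanSpace ℝ (Fin d))) (t : ℝ),
      0 < t →
      (2 * ∫⁻ ξ in {ξ : EuclideanSpace ℝ (Fin d) | 1 < ‖ξ‖},
          ENNReal.ofReal (‖ξ‖ ^ 4 / 4 *
            ∫ s in (0:ℝ)..t, Real.exp (-(t - s) * ‖ξ‖ ^ 2 / 2) *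
              ∫ s' in (0:ℝ)..s, Real.exp (-(t - s') * ‖ξ‖ ^ 2 / 2) * |t - s'| ^ β) ∂μ
        ≤ ENNReal.ofReal K *
          ∫⁻ ξ in {ξ : EuclideanSpace ℝ (Fin d) | 1 < ‖ξ‖},
            ENNReal.ofReal (‖ξ‖ ^ (-(2 * β))) ∂μ) ∧
      ((∫⁻ ξ, ENNReal.ofReal ((1 + ‖ξ‖ ^ (2 * β))⁻¹) ∂μ < ⊤) →
        2 * ∫⁻ ξ in {ξ : EuclideanSpace ℝ (Fin d) | 1 < ‖ξ‖},
          ENNReal.ofReal (‖ξ‖ ^ 4 / 4 *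
            ∫ s in (0:ℝ)..t, Real.exp (-(t - s) * ‖ξ‖ ^ 2 / 2) *
              ∫ s' in (0:ℝ)..s, Real.exp (-(t - s') * ‖ξ‖ ^ 2 / 2) * |t - s'| ^ β) ∂μ
          < ⊤) := by
  refine ⟨20 * 4 ^ β, by positivity, fun d μ t ht => ?_⟩
  set S : Set (EuclideanSpace ℝ (Fin d)) := {ξ | 1 < ‖ξ‖} with hS_def
  have hS : MeasurableSet S := measurableSet_lt measurable_const measurable_norm
  set F : EuclideanSpace ℝ (Fin d) → ℝ := fun ξ => ‖ξ‖ ^ 4 / 4 *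
      ∫ s in (0:ℝ)..t, Real.exp (-(t - s) * ‖ξ‖ ^ 2 / 2) *
        ∫ s' in (0:ℝ)..s, Real.exp (-(t - s') * ‖ξ‖ ^ 2 / 2) * |t - s'| ^ β with hF_def
  have hmain : (∫⁻ ξ in S, ENNReal.ofReal (F ξ) ∂μ)
      ≤ ENNReal.ofReal (10 * 4 ^ β) *
        ∫⁻ ξ in S, ENNReal.ofReal (‖ξ‖ ^ (-(2 * β))) ∂μ := by
    calc (∫⁻ ξ in S, ENNReal.ofReal (F ξ) ∂μ)
        ≤ ∫⁻ ξ in S, ENNReal.ofReal (10 * 4 ^ β) *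
            ENNReal.ofReal (‖ξ‖ ^ (-(2 * β))) ∂μ := by
          apply setLIntegral_mono' hS
          intro ξ hξ
          rw [← ENNReal.ofReal_mul (by positivity)]
          exact ENNReal.ofReal_le_ofReal
            (pointwise β t ‖ξ‖ hβ hβ2 ht (le_of_lt hξ))
      _ = _ := lintegral_const_mul' _ _ ENNReal.ofReal_ne_top
  have h2K : (2 : ℝ≥0∞) * ENNReal.ofReal (10 * 4 ^ β) = ENNReal.ofReal (20 * 4 ^ β) := by
    rw [show (2 : ℝ≥0∞) = ENNReal.ofReal 2 by norm_num,
      ← ENNReal.ofReal_mul (by norm_num)]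
    ring_nf
  have part1 : 2 * (∫⁻ ξ in S, ENNReal.ofReal (F ξ) ∂μ)
      ≤ ENNReal.ofReal (20 * 4 ^ β) *
        ∫⁻ ξ in S, ENNReal.ofReal (‖ξ‖ ^ (-(2 * β))) ∂μ := by
    calc 2 * (∫⁻ ξ in S, ENNReal.ofReal (F ξ) ∂μ)
        ≤ 2 * (ENNReal.ofReal (10 * 4 ^ β) *
            ∫⁻ ξ in S, ENNReal.ofReal (‖ξ‖ ^ (-(2 * β))) ∂μ) := mul_le_mul_right hmain 2
      _ = _ := by rw [← mul_assoc, h2K]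
  refine ⟨part1, fun hfin => ?_⟩
  have h1 : (∫⁻ ξ in S, ENNReal.ofReal (‖ξ‖ ^ (-(2 * β))) ∂μ)
      ≤ 2 * ∫⁻ ξ, ENNReal.ofReal ((1 + ‖ξ‖ ^ (2 * β))⁻¹) ∂μ := by
    calc (∫⁻ ξ in S, ENNReal.ofReal (‖ξ‖ ^ (-(2 * β))) ∂μ)
        ≤ ∫⁻ ξ in S, 2 * ENNReal.ofReal ((1 + ‖ξ‖ ^ (2 * β))⁻¹) ∂μ := by
          apply setLIntegral_mono' hS
          intro ξ hξ
          have hξ1 : (1:ℝ) ≤ ‖ξ‖ := le_of_lt hξ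
          have hX : (1:ℝ) ≤ ‖ξ‖ ^ (2 * β) := Real.one_le_rpow hξ1 (by positivity)
          have hX0 : (0:ℝ) < ‖ξ‖ ^ (2 * β) := lt_of_lt_of_le one_pos hX
          have hreal : ‖ξ‖ ^ (-(2 * β)) ≤ 2 * (1 + ‖ξ‖ ^ (2 * β))⁻¹ := by
            calc ‖ξ‖ ^ (-(2 * β)) = (‖ξ‖ ^ (2 * β))⁻¹ :=
                  Real.rpow_neg (norm_nonneg ξ) (2 * β)
              _ ≤ 2 * (1 + ‖ξ‖ ^ (2 * β))⁻¹ := by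
                  rw [show (2:ℝ) * (1 + ‖ξ‖ ^ (2 * β))⁻¹ = 2 / (1 + ‖ξ‖ ^ (2 * β)) from
                      (div_eq_mul_inv 2 _).symm,
                    show (‖ξ‖ ^ (2 * β))⁻¹ = 1 / ‖ξ‖ ^ (2 * β) from (one_div _).symm,
                    div_le_div_iff₀ hX0 (by linarith)]
                  linarith
          calc ENNReal.ofReal (‖ξ‖ ^ (-(2 * β)))
              ≤ ENNReal.ofReal (2 * (1 + ‖ξ‖ ^ (2 * β))⁻¹) := ENNReal.ofReal_le_ofReal hreal
            _ = 2 * ENNReal.ofReal ((1 + ‖ξ‖ ^ (2 * β))⁻¹) := by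
                rw [ENNReal.ofReal_mul (by norm_num)]; norm_num
      _ = 2 * ∫⁻ ξ in S, ENNReal.ofReal ((1 + ‖ξ‖ ^ (2 * β))⁻¹) ∂μ :=
          lintegral_const_mul' 2 _ (by norm_num)
      _ ≤ 2 * ∫⁻ ξ, ENNReal.ofReal ((1 + ‖ξ‖ ^ (2 * β))⁻¹) ∂μ :=
          mul_le_mul_right (setLIntegral_le_lintegral S _) 2
  have hfin2 : (∫⁻ ξ in S, ENNReal.ofReal (‖ξ‖ ^ (-(2 * β))) ∂μ) < ⊤ :=
    lt_of_le_of_lt h1 (ENNReal.mul_lt_top (by norm_num) hfin)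
  exact lt_of_le_of_lt part1 (ENNReal.mul_lt_top ENNReal.ofReal_lt_top hfin2)
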